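/- Let K ≥ 2 and let g_1, …, g_T : {1,…,K} → [0,1] be an arbitrary sequence of reward functions. If the Multiplicative Weights distributions p_t are computed with the time-varying learning rates η_t = 2·√(log K / t), then for every action a⋆ ∈ {1,…,K}: Σ_{t=1}^T g_t(a⋆) − Σ_{t=1}^T Σ_{a=1}^K p_t[a]·g_t(a) ≤ √(T · log K). -/

import Mathlib

open Finset

lemma upos (m : ℝ) (hm0 : 0 ≤ m) (hm1 : m ≤ 1) (x : ℝ) :
    0 < 1 - m + m * Real.exp x := by
  rcases eq_or_lt_of_le hm0 with h | h
  · simp [← h]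
  · have := mul_pos h (Real.exp_pos x); linarith

lemma bernoulli_hoeffding (m : ℝ) (hm0 : 0 ≤ m) (hm1 : m ≤ 1) {t : ℝ} (ht : 0 ≤ t) :
    Real.log (1 - m + m * Real.exp t) ≤ t * m + t ^ 2 / 8 := by
  set u : ℝ → ℝ := fun x => 1 - m + m * Real.exp x with hu
  have hupos : ∀ x, 0 < u x := upos m hm0 hm1
  have hud : ∀ x, HasDerivAt u (m * Real.exp x) x := fun x => by
    exact ((Real.hasDerivAt_exp x).const_mul m).const_add (1 - m)
  set f : ℝ → ℝ := fun x => m * Real.exp x / u x - m - x / 4 with hf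
  have hfd : ∀ x, HasDerivAt f
      ((m * Real.exp x * u x - m * Real.exp x * (m * Real.exp x)) / (u x) ^ 2 - 1 / 4) x := by
    intro x
    have h1 : HasDerivAt (fun x => m * Real.exp x / u x)
        ((m * Real.exp x * u x - m * Real.exp x * (m * Real.exp x)) / (u x) ^ 2) x :=
      ((Real.hasDerivAt_exp x).const_mul m).div (hud x) (hupos x).ne'
    have h2 := (h1.sub_const m).sub ((hasDerivAt_id x).div_const 4)
    exact h2
  have hf0 : f 0 = 0 := by simp [hf, hu]
  have hfanti : AntitoneOn f (Set.Ici (0:ℝ)) := by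
    apply antitoneOn_of_deriv_nonpos (convex_Ici 0)
    · exact fun x _ => (hfd x).continuousAt.continuousWithinAt
    · exact fun x _ => (hfd x).differentiableAt.differentiableWithinAt
    · intro x _
      rw [(hfd x).deriv]
      have hx2 : (0:ℝ) < (u x) ^ 2 := pow_pos (hupos x) 2
      have key : (m * Real.exp x * u x - m * Real.exp x * (m * Real.exp x)) / (u x) ^ 2 ≤ 1 / 4 := by
        rw [div_le_iff₀ hx2]
        have : u x = 1 - m + m * Real.exp x := rfl
        nlinarith [sq_nonneg (1 - m - m * Real.exp x)]
      linarith
  have hfle : ∀ x ∈ Set.Ici (0:ℝ), f x ≤ 0 := fun x hx => by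
    have := hfanti (Set.mem_Ici.2 le_rfl) hx hx
    simpa [hf0] using this
  set φ : ℝ → ℝ := fun x => Real.log (u x) - x * m - x ^ 2 / 8 with hφ
  have hφd : ∀ x, HasDerivAt φ (f x) x := by
    intro x
    have hl : HasDerivAt (fun x => Real.log (u x)) (m * Real.exp x / u x) x :=
      (hud x).log (hupos x).ne'
    have h2 : HasDerivAt (fun x : ℝ => x ^ 2 / 8) (x / 4) x := by
      have := (hasDerivAt_pow 2 x).div_const 8
      exact this.congr_deriv (by simp only [Nat.cast_ofNat, show (2:ℕ) - 1 = 1 from rfl, pow_one]; ring)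
    have := (hl.sub (hasDerivAt_mul_const m)).sub h2
    exact this
  have hφanti : AntitoneOn φ (Set.Ici (0:ℝ)) := by
    apply antitoneOn_of_deriv_nonpos (convex_Ici 0)
    · exact fun x _ => (hφd x).continuousAt.continuousWithinAt
    · exact fun x _ => (hφd x).differentiableAt.differentiableWithinAt
    · intro x hx
      rw [(hφd x).deriv]
      exact hfle x (interior_subset hx)
  have h0 : φ 0 = 0 := by simp [hφ, hu]
  have := hφanti (Set.mem_Ici.2 le_rfl) (Set.mem_Ici.2 ht) ht
  rw [h0] at this
  have : Real.log (u t) - t * m - t ^ 2 / 8 ≤ 0 := this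
  linarith

lemma finite_hoeffding {K : ℕ} (p x : Fin K → ℝ) (hp : ∀ a, 0 ≤ p a)
    (hps : ∑ a, p a = 1) (hx : ∀ a, x a ∈ Set.Icc (0:ℝ) 1) {t : ℝ} (ht : 0 ≤ t) :
    Real.log (∑ a, p a * Real.exp (t * x a)) ≤ t * (∑ a, p a * x a) + t ^ 2 / 8 := by
  set m := ∑ a, p a * x a with hm
  have hm0 : 0 ≤ m := Finset.sum_nonneg fun a _ => mul_nonneg (hp a) (hx a).1
  have hm1 : m ≤ 1 := by
    rw [hm, ← hps]
    exact Finset.sum_le_sum fun a _ => by nlinarith [(hx a).2, hp a, (hx a).1]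
  have hpt : ∀ a, Real.exp (t * x a) ≤ 1 - x a + x a * Real.exp t := by
    intro a
    have h : Real.exp ((1 - x a) • (0:ℝ) + x a • t) ≤
        (1 - x a) • Real.exp 0 + x a • Real.exp t :=
      convexOn_exp.2 (Set.mem_univ (0:ℝ)) (Set.mem_univ t)
        (by linarith [(hx a).2]) (hx a).1 (by ring)
    simp only [smul_eq_mul, mul_zero, zero_add, Real.exp_zero, mul_one] at h
    calc Real.exp (t * x a) = Real.exp (x a * t) := by rw [mul_comm]
      _ ≤ 1 - x a + x a * Real.exp t := by linarith
      _ = 1 - x a + x a * Real.exp t := by ring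
  have hsum : ∑ a, p a * Real.exp (t * x a) ≤ 1 - m + m * Real.exp t := by
    calc ∑ a, p a * Real.exp (t * x a)
        ≤ ∑ a, p a * (1 - x a + x a * Real.exp t) :=
          Finset.sum_le_sum fun a _ => mul_le_mul_of_nonneg_left (hpt a) (hp a)
      _ = (∑ a, p a) - m + m * Real.exp t := by
          rw [hm, Finset.sum_mul, ← Finset.sum_sub_distrib, ← Finset.sum_add_distrib]
          exact Finset.sum_congr rfl fun a _ => by ring
      _ = 1 - m + m * Real.exp t := by rw [hps]
  have hpos : (1:ℝ) ≤ ∑ a, p a * Real.exp (t * x a) := by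
    rw [← hps]
    exact Finset.sum_le_sum fun a _ =>
      le_mul_of_one_le_right (hp a) (Real.one_le_exp (mul_nonneg ht (hx a).1))
  calc Real.log (∑ a, p a * Real.exp (t * x a))
      ≤ Real.log (1 - m + m * Real.exp t) :=
        Real.log_le_log (by linarith) hsum
    _ ≤ t * m + t ^ 2 / 8 := bernoulli_hoeffding m hm0 hm1 ht

lemma pm_mono {K : ℕ} (hK : 0 < K) (S : Fin K → ℝ) {a b : ℝ} (ha : 0 < a) (hab : a ≤ b) :
    (1 / a) * Real.log ((1 / K) * ∑ i, Real.exp (a * S i)) ≤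
    (1 / b) * Real.log ((1 / K) * ∑ i, Real.exp (b * S i)) := by
  have hb : 0 < b := lt_of_lt_of_le ha hab
  have hKR : (0:ℝ) < K := Nat.cast_pos.2 hK
  have hw' : ∑ _i : Fin K, (1:ℝ)/K = 1 := by
    rw [Finset.sum_const, Finset.card_univ, Fintype.card_fin]
    rw [nsmul_eq_mul]; field_simp
  have hp1 : (1:ℝ) ≤ b / a := (one_le_div ha).2 hab
  have key := Real.rpow_arith_mean_le_arith_mean_rpow Finset.univ (fun _ : Fin K => (1:ℝ)/K)
    (fun i => Real.exp (a * S i)) (fun i _ => by positivity) hw'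
    (fun i _ => (Real.exp_pos _).le) hp1
  have hrw : ∀ i : Fin K, Real.exp (a * S i) ^ (b / a) = Real.exp (b * S i) := by
    intro i
    rw [← Real.exp_log (Real.exp_pos (a * S i)), ← Real.exp_mul, Real.log_exp]
    congr 1
    field_simp
  rw [← Finset.mul_sum, ← Finset.mul_sum] at key
  simp only [hrw] at key
  have hA : (0:ℝ) < (1 / K) * ∑ i, Real.exp (a * S i) := by
    have hne : Nonempty (Fin K) := ⟨⟨0, hK⟩⟩
    have : (0:ℝ) < ∑ i : Fin K, Real.exp (a * S i) :=
      Finset.sum_pos (fun i _ => Real.exp_pos _) Finset.univ_nonempty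
    positivity
  have hlog := Real.log_le_log (Real.rpow_pos_of_pos hA _) key
  rw [Real.log_rpow hA] at hlog
  calc (1 / a) * Real.log ((1 / K) * ∑ i, Real.exp (a * S i))
      = (1 / b) * ((b / a) * Real.log ((1 / K) * ∑ i, Real.exp (a * S i))) := by
        field_simp
    _ ≤ (1 / b) * Real.log ((1 / K) * ∑ i, Real.exp (b * S i)) :=
        mul_le_mul_of_nonneg_left hlog (by positivity)

lemma sum_inv_sqrt (T : ℕ) : ∑ t ∈ Finset.range T, 1 / Real.sqrt (t + 1) ≤ 2 * Real.sqrt T := by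
  induction T with
  | zero => simp
  | succ n ih =>
    rw [Finset.sum_range_succ]
    have h1 : Real.sqrt n ≤ Real.sqrt (n + 1) := Real.sqrt_le_sqrt (by push_cast; linarith)
    have hpos : (0:ℝ) < Real.sqrt ((n:ℝ) + 1) := Real.sqrt_pos.2 (by positivity)
    have key : 1 / Real.sqrt ((n:ℝ) + 1) ≤ 2 * (Real.sqrt ((n:ℝ) + 1) - Real.sqrt n) := by
      rw [div_le_iff₀ hpos]
      nlinarith [Real.sq_sqrt (show (0:ℝ) ≤ (n:ℝ) by positivity),
        Real.sq_sqrt (show (0:ℝ) ≤ (n:ℝ) + 1 by positivity),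
        Real.sqrt_nonneg (n:ℝ), sq_nonneg (Real.sqrt ((n:ℝ)+1) - Real.sqrt n)]
    push_cast
    linarith


/-- **Multiplicative Weights regret bound with learning rates `η t = 2√(log K / t)`.**
Given `K ≥ 2` actions and reward functions `g 0, …, g (T-1) : Fin K → [0,1]`,
let `p t` be the Multiplicative Weights distribution at round `t`
(indexed from `0`, so that round `t` is the `(t+1)`-st round and uses
learning rate `η t = 2 * √(log K / (t+1))`):
`p t a = exp (η t * ∑_{τ < t} g τ a) / ∑_b exp (η t * ∑_{τ < t} g τ b)`.
Then for every action `a⋆`,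
`∑_t g t a⋆ − ∑_t ∑_a p t a * g t a ≤ √(T * log K)`. -/
theorem mw_regret_bound_sqrt_rates
    (K T : ℕ) (hK : 2 ≤ K)
    (g : ℕ → Fin K → ℝ)
    (hg : ∀ t < T, ∀ a : Fin K, g t a ∈ Set.Icc (0 : ℝ) 1)
    (η : ℕ → ℝ)
    (hη : ∀ t < T, η t = 2 * Real.sqrt (Real.log K / (t + 1)))
    (p : ℕ → Fin K → ℝ)
    (hp : ∀ t < T, ∀ a : Fin K,
      p t a = Real.exp (η t * ∑ τ ∈ Finset.range t, g τ a) /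
        ∑ b : Fin K, Real.exp (η t * ∑ τ ∈ Finset.range t, g τ b))
    (astar : Fin K) :
    ∑ t ∈ Finset.range T, g t astar
      - ∑ t ∈ Finset.range T, ∑ a : Fin K, p t a * g t a
    ≤ Real.sqrt (T * Real.log K) := by
  rcases Nat.eq_zero_or_pos T with hT0 | hT
  · subst hT0; simp [Real.sqrt_nonneg]
  have hKn : 0 < K := lt_of_lt_of_le (by norm_num) hK
  have hK1 : (1:ℝ) < K := by exact_mod_cast lt_of_lt_of_le one_lt_two hK
  have hKpos : (0:ℝ) < K := by linarith
  have hlogK : 0 < Real.log K := Real.log_pos hK1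
  have hne : Nonempty (Fin K) := ⟨⟨0, hKn⟩⟩
  set L := Real.sqrt (Real.log K) with hL
  have hLpos : 0 < L := Real.sqrt_pos.2 hlogK
  -- learning-rate facts
  have hηeq : ∀ t < T, η t = 2 * (L / Real.sqrt ((t:ℝ) + 1)) := by
    intro t ht
    rw [hη t ht, Real.sqrt_div hlogK.le]
  have hηpos : ∀ t < T, 0 < η t := by
    intro t ht
    rw [hηeq t ht]
    have h1 : (0:ℝ) < Real.sqrt ((t:ℝ) + 1) := Real.sqrt_pos.2 (by positivity)
    positivity
  have hηmono : ∀ t, t < T → η t ≤ η (t - 1) := by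
    intro t ht
    rcases Nat.eq_zero_or_pos t with h0 | h0
    · simp [h0]
    · have ht' : t - 1 < T := lt_of_le_of_lt (Nat.sub_le t 1) ht
      rw [hηeq t ht, hηeq (t - 1) ht']
      have hcast : ((t - 1 : ℕ) : ℝ) + 1 = (t : ℝ) := by
        rw [Nat.cast_sub h0]; push_cast; ring
      rw [hcast]
      have htpos : (0:ℝ) < Real.sqrt (t:ℝ) := Real.sqrt_pos.2 (by exact_mod_cast h0)
      have hmono : Real.sqrt (t:ℝ) ≤ Real.sqrt ((t:ℝ) + 1) := Real.sqrt_le_sqrt (by linarith)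
      gcongr
  -- potential
  set S : ℕ → Fin K → ℝ := fun t a => ∑ τ ∈ Finset.range t, g τ a with hS
  set Z : ℕ → ℝ → ℝ := fun t e => (1 / K) * ∑ a, Real.exp (e * S t a) with hZ
  have hsumpos : ∀ t e, (0:ℝ) < ∑ a : Fin K, Real.exp (e * S t a) := fun t e =>
    Finset.sum_pos (fun _ _ => Real.exp_pos _) Finset.univ_nonempty
  have hZpos : ∀ t e, 0 < Z t e := by
    intro t e
    have := hsumpos t e
    rw [hZ]; positivity
  set ψ : ℕ → ℝ := fun t => (1 / η (t - 1)) * Real.log (Z t (η (t - 1))) with hψ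
  have hZ0 : ∀ e, Z 0 e = 1 := by
    intro e
    rw [hZ]
    simp [hS, Finset.card_univ]
    field_simp
  have hψ0 : ψ 0 = 0 := by rw [hψ]; simp [hZ0]
  -- per-step bound
  have hstep : ∀ t < T, ψ (t + 1) - ψ t ≤ (∑ a, p t a * g t a) + η t / 8 := by
    intro t ht
    have hηt : 0 < η t := hηpos t ht
    set e := η t with he
    set D := ∑ b : Fin K, Real.exp (e * S t b) with hD
    have hDpos : 0 < D := hsumpos t e
    have hpa : ∀ a, p t a = Real.exp (e * S t a) / D := fun a => hp t ht a
    have hpnn : ∀ a, 0 ≤ p t a := fun a => by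
      rw [hpa a]; positivity
    have hps : ∑ a, p t a = 1 := by
      simp only [hpa]
      rw [← Finset.sum_div, ← hD, div_self hDpos.ne']
    set Q := ∑ a, p t a * Real.exp (e * g t a) with hQ
    have hQ1 : (1:ℝ) ≤ Q := by
      rw [hQ, ← hps]
      exact Finset.sum_le_sum fun a _ =>
        le_mul_of_one_le_right (hpnn a) (Real.one_le_exp (mul_nonneg hηt.le (hg t ht a).1))
    have hQpos : 0 < Q := lt_of_lt_of_le one_pos hQ1
    have hZstep : Z (t + 1) e = Z t e * Q := by
      rw [hZ, hQ]
      simp only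
      have hterm : ∀ a : Fin K, Real.exp (e * S (t + 1) a) =
          Real.exp (e * S t a) * Real.exp (e * g t a) := by
        intro a
        rw [← Real.exp_add]
        congr 1
        rw [hS]
        simp only
        rw [Finset.sum_range_succ]
        ring
      have : ∑ a, Real.exp (e * S (t + 1) a) = D * Q := by
        rw [hQ, Finset.mul_sum]
        apply Finset.sum_congr rfl
        intro a _
        rw [hterm a, hpa a]
        field_simp
      rw [this, hD]
      ring
    have hlogQ : Real.log Q ≤ e * (∑ a, p t a * g t a) + e ^ 2 / 8 :=
      finite_hoeffding (p t) (g t) hpnn hps (fun a => hg t ht a) hηt.le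
    have hmon : (1 / e) * Real.log (Z t e) ≤ ψ t := by
      rcases Nat.eq_zero_or_pos t with h0 | h0
      · subst h0
        rw [hψ]
      · have := pm_mono hKn (S t) hηt (hηmono t ht)
        rw [hψ, hZ]
        exact this
    have hψt1 : ψ (t + 1) = (1 / e) * Real.log (Z (t + 1) e) := by
      rw [hψ]
      simp [he]
    have hlogmul : Real.log (Z (t + 1) e) = Real.log (Z t e) + Real.log Q := by
      rw [hZstep, Real.log_mul (hZpos t e).ne' hQpos.ne']
    have hmain : (1 / e) * Real.log Q ≤ (∑ a, p t a * g t a) + e / 8 := by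
      have := mul_le_mul_of_nonneg_left hlogQ (le_of_lt (one_div_pos.2 hηt))
      calc (1 / e) * Real.log Q ≤ (1 / e) * (e * (∑ a, p t a * g t a) + e ^ 2 / 8) := this
        _ = (∑ a, p t a * g t a) + e / 8 := by field_simp
    calc ψ (t + 1) - ψ t ≤ ψ (t + 1) - (1 / e) * Real.log (Z t e) := by linarith
      _ = (1 / e) * Real.log Q := by rw [hψt1, hlogmul]; ring
      _ ≤ (∑ a, p t a * g t a) + e / 8 := hmain
  -- telescoping
  have htel : ∑ t ∈ Finset.range T, (ψ (t + 1) - ψ t) = ψ T - ψ 0 := Finset.sum_range_sub ψ T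
  have hsumψ : ψ T ≤ ∑ t ∈ Finset.range T, ((∑ a, p t a * g t a) + η t / 8) := by
    rw [← sub_zero (ψ T), ← hψ0, ← htel]
    exact Finset.sum_le_sum fun t ht => hstep t (Finset.mem_range.1 ht)
  -- lower bound on ψ T
  have hTm : T - 1 < T := Nat.sub_lt hT one_pos
  set eT := η (T - 1) with heT
  have heTpos : 0 < eT := hηpos _ hTm
  have hlow : S T astar - Real.log K / eT ≤ ψ T := by
    have h1 : Real.exp (eT * S T astar) ≤ ∑ a, Real.exp (eT * S T a) :=
      Finset.single_le_sum (f := fun a => Real.exp (eT * S T a))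
        (fun a _ => (Real.exp_pos _).le) (Finset.mem_univ astar)
    have h2 : Real.log ((1 / K) * Real.exp (eT * S T astar)) ≤ Real.log (Z T eT) := by
      apply Real.log_le_log (by positivity)
      rw [hZ]
      exact mul_le_mul_of_nonneg_left h1 (by positivity)
    rw [Real.log_mul (by positivity) (Real.exp_pos _).ne', Real.log_exp, one_div,
      Real.log_inv] at h2
    rw [hψ]
    calc S T astar - Real.log K / eT
        = (1 / eT) * (-Real.log K + eT * S T astar) := by field_simp; ring
      _ ≤ (1 / eT) * Real.log (Z T eT) :=
          mul_le_mul_of_nonneg_left h2 (le_of_lt (one_div_pos.2 heTpos))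
  -- numerics
  have hsqT : 0 < Real.sqrt T := Real.sqrt_pos.2 (by exact_mod_cast hT)
  have hcastT : ((T - 1 : ℕ) : ℝ) + 1 = (T : ℝ) := by
    rw [Nat.cast_sub hT]; push_cast; ring
  have heTval : eT = 2 * (L / Real.sqrt T) := by
    rw [heT, hηeq _ hTm, hcastT]
  have hrate : Real.log K / eT = Real.sqrt T * L / 2 := by
    rw [heTval]
    have hlog' : Real.log K = L ^ 2 := (Real.sq_sqrt hlogK.le).symm
    rw [hlog']
    field_simp
  have hηsum : ∑ t ∈ Finset.range T, η t ≤ 4 * L * Real.sqrt T := by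
    calc ∑ t ∈ Finset.range T, η t
        = ∑ t ∈ Finset.range T, 2 * L * (1 / Real.sqrt ((t:ℝ) + 1)) := by
          refine Finset.sum_congr rfl fun t ht => ?_
          rw [hηeq t (Finset.mem_range.1 ht)]
          ring
      _ = 2 * L * ∑ t ∈ Finset.range T, 1 / Real.sqrt ((t:ℝ) + 1) := by
          rw [Finset.mul_sum]
      _ ≤ 2 * L * (2 * Real.sqrt T) :=
          mul_le_mul_of_nonneg_left (sum_inv_sqrt T) (by positivity)
      _ = 4 * L * Real.sqrt T := by ring
  have hfinal : Real.sqrt (T * Real.log K) = Real.sqrt T * L := by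
    rw [hL, Real.sqrt_mul (Nat.cast_nonneg T)]
  -- combine
  have hsum2 : ∑ t ∈ Finset.range T, ((∑ a, p t a * g t a) + η t / 8)
      = (∑ t ∈ Finset.range T, ∑ a, p t a * g t a) + (∑ t ∈ Finset.range T, η t) / 8 := by
    rw [Finset.sum_add_distrib, Finset.sum_div]
  have hgoal : S T astar = ∑ t ∈ Finset.range T, g t astar := by rw [hS]
  rw [hfinal, ← hgoal]
  linarith [hlow, hsumψ, hηsum, hrate, hsum2]
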